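/- Let r, m be positive integers and k a natural number. Then M_r(k,m) ≤ ((r!)^m/(mr−1)!) · ∫_0^m x^k (m−x)^{mr−1} dx = k!·(r!)^m·m^{k+rm}/(k+mr)!. -/

import Mathlib

open MeasureTheory Finset in
private lemma beta_nat' (b a : ℕ) :
    ∫ x in (0:ℝ)..1, x ^ a * (1 - x) ^ b
      = (a.factorial * b.factorial : ℝ) / (a + b + 1).factorial := by
  induction b generalizing a with
  | zero =>
      simp only [pow_zero, mul_one, integral_pow, one_pow, Nat.add_zero,
        Nat.factorial_succ, Nat.factorial_zero, zero_pow (Nat.succ_ne_zero a), Nat.cast_mul]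
      rw [div_eq_div_iff (by positivity) (by positivity)]
      push_cast
      ring
  | succ b ih =>
      have key := intervalIntegral.integral_mul_deriv_eq_deriv_mul
        (u := fun x : ℝ => (1 - x) ^ (b + 1))
        (u' := fun x : ℝ => -((b + 1 : ℝ) * (1 - x) ^ b))
        (v := fun x : ℝ => x ^ (a + 1) / (a + 1))
        (v' := fun x : ℝ => x ^ a) (a := (0:ℝ)) (b := (1:ℝ))
        (fun x _ => by
          have h1 : HasDerivAt (fun x : ℝ => 1 - x) (-1) x := by
            simpa using (hasDerivAt_id x).const_sub 1
          have := (hasDerivAt_pow (b + 1) (1 - x)).comp x h1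
          simpa [mul_comm, Function.comp_def] using this)
        (fun x _ => by
          have := (hasDerivAt_pow (a + 1) x).div_const (a + 1)
          have h2 : ((a:ℝ) + 1) * x ^ a / ((a:ℝ) + 1) = x ^ a := by
            field_simp
          simpa [h2] using this)
        (by apply Continuous.intervalIntegrable; continuity)
        (by apply Continuous.intervalIntegrable; continuity)
      have h0 : ∫ x in (0:ℝ)..1, x ^ a * (1 - x) ^ (b+1)
          = ∫ x in (0:ℝ)..1, (1 - x) ^ (b+1) * x ^ a := by
        simp_rw [mul_comm]
      rw [h0, key]
      have h1 : ∫ x in (0:ℝ)..1, -((b + 1 : ℝ) * (1 - x) ^ b) * (x ^ (a+1) / (a+1))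
          = -((b+1:ℝ)/(a+1)) * ∫ x in (0:ℝ)..1, x ^ (a+1) * (1 - x) ^ b := by
        rw [← intervalIntegral.integral_const_mul]
        apply intervalIntegral.integral_congr
        intro x _
        ring
      rw [h1, ih]
      simp only [Nat.factorial_succ]
      have hne1 : ((a + 1 + b + 1).factorial : ℝ) ≠ 0 := by positivity
      have hne2 : ((a + (b+1) + 1).factorial : ℝ) ≠ 0 := by positivity
      have hidx : a + 1 + b + 1 = a + (b + 1) + 1 := by omega
      rw [hidx] at hne1 ⊢
      field_simp
      push_cast
      ring

open MeasureTheory Finset in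
private lemma beta_scaled' (M : ℝ) (hM : 0 < M) (a b : ℕ) :
    ∫ x in (0:ℝ)..M, x ^ a * (M - x) ^ b
      = M ^ (a + b + 1) * ((a.factorial * b.factorial : ℝ) / (a + b + 1).factorial) := by
  have h := intervalIntegral.integral_comp_mul_left
    (a := (0:ℝ)) (b := (1:ℝ)) (f := fun x => x ^ a * (M - x) ^ b) hM.ne'
  simp only [mul_zero, mul_one] at h
  have h2 : ∫ x in (0:ℝ)..1, (M * x) ^ a * (M - M * x) ^ b
      = M ^ (a + b) * ∫ x in (0:ℝ)..1, x ^ a * (1 - x) ^ b := by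
    rw [← intervalIntegral.integral_const_mul]
    apply intervalIntegral.integral_congr
    intro x _
    simp only [← mul_one_sub M x, mul_pow]
    ring
  rw [h2, beta_nat'] at h
  have h3 : (∫ x in (0:ℝ)..M, x ^ a * (M - x) ^ b)
      = M * (M ^ (a+b) * ((a.factorial * b.factorial : ℝ) / (a + b + 1).factorial)) := by
    rw [h, smul_eq_mul, ← mul_assoc, mul_inv_cancel₀ hM.ne', one_mul]
  rw [h3, ← mul_assoc, ← pow_succ']

open MeasureTheory Finset in
private lemma betaI' (r : ℕ) (hr : 0 < r) (j : ℕ) :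
    ∫ t in Set.Icc (0:ℝ) 1, t ^ j * ((r:ℝ) * (1 - t) ^ (r - 1))
      = (j.factorial * r.factorial : ℝ) / (j + r).factorial := by
  rw [MeasureTheory.integral_Icc_eq_integral_Ioc,
    ← intervalIntegral.integral_of_le (zero_le_one)]
  have h : ∀ t : ℝ, t ^ j * ((r:ℝ) * (1 - t) ^ (r - 1)) = (r:ℝ) * (t ^ j * (1 - t) ^ (r - 1)) := by
    intro t; ring
  simp_rw [h]
  rw [intervalIntegral.integral_const_mul, beta_nat']
  have hidx : j + (r - 1) + 1 = j + r := by omega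
  have hfac : (r : ℝ) * (r - 1).factorial = r.factorial := by
    conv_rhs => rw [show r = (r - 1) + 1 by omega, Nat.factorial_succ]
    push_cast [show r - 1 + 1 = r from by omega]
    ring
  rw [hidx, ← hfac]
  ring

open MeasureTheory Finset in
private lemma cube_prod_integral' (m : ℕ) (F : Fin m → ℝ → ℝ) :
    ∫ x in Set.Icc (0 : Fin m → ℝ) 1, ∏ i, F i (x i)
      = ∏ i, ∫ t in Set.Icc (0:ℝ) 1, F i t := by
  rw [← integral_indicator measurableSet_Icc]
  have key : (Set.Icc (0 : Fin m → ℝ) 1).indicator (fun x => ∏ i, F i (x i))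
       = fun x => ∏ i, (Set.Icc (0:ℝ) 1).indicator (F i) (x i) := by
    funext x
    by_cases hx : x ∈ Set.Icc (0 : Fin m → ℝ) 1
    · rw [Set.indicator_of_mem hx]
      have hxi : ∀ i, x i ∈ Set.Icc (0:ℝ) 1 := fun i => ⟨hx.1 i, hx.2 i⟩
      exact Finset.prod_congr rfl fun i _ => (Set.indicator_of_mem (hxi i) _).symm
    · rw [Set.indicator_of_notMem hx]
      have : ∃ i, x i ∉ Set.Icc (0:ℝ) 1 := by
        by_contra hcon
        push_neg at hcon
        exact hx ⟨fun i => (hcon i).1, fun i => (hcon i).2⟩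
      obtain ⟨i, hi⟩ := this
      exact (Finset.prod_eq_zero (Finset.mem_univ i)
        (by simp [Set.indicator_of_notMem hi])).symm
  rw [key]
  beta_reduce
  rw [MeasureTheory.integral_fintype_prod_volume_eq_prod (ι := Fin m)
      (f := fun i => (Set.Icc (0:ℝ) 1).indicator (F i))]
  simp_rw [integral_indicator measurableSet_Icc]

open MeasureTheory in
/-- `momentM r m k` is the `k`-th moment of the sum of `m` i.i.d. Beta(1,r) random
variables, written as an integral over the cube `[0,1]^m`. -/
noncomputable def momentM (r m k : ℕ) : ℝ :=
  ∫ x in Set.Icc (0 : Fin m → ℝ) 1,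
    (∑ i, x i) ^ k * ∏ i, (r : ℝ) * (1 - x i) ^ (r - 1)

open MeasureTheory Finset in
private lemma momentM_eq' (r m k : ℕ) (hr : 0 < r) :
    momentM r m k = (k.factorial : ℝ) * ((r.factorial : ℝ)) ^ m *
      ∑ c ∈ piAntidiag (univ : Finset (Fin m)) k,
        (∏ i, ((c i + r).factorial : ℝ))⁻¹ := by
  have hexp : ∀ x : Fin m → ℝ,
      (∑ i, x i) ^ k * ∏ i, (r : ℝ) * (1 - x i) ^ (r - 1)
        = ∑ c ∈ piAntidiag (univ : Finset (Fin m)) k,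
            (Nat.multinomial univ c : ℝ) *
              ∏ i, ((x i) ^ (c i) * ((r : ℝ) * (1 - x i) ^ (r - 1))) := by
    intro x
    rw [Finset.sum_pow_eq_sum_piAntidiag, Finset.sum_mul]
    exact Finset.sum_congr rfl fun c _ => by rw [mul_assoc, ← Finset.prod_mul_distrib]
  have hcont : ∀ c : Fin m → ℕ, Continuous fun x : Fin m → ℝ =>
      (Nat.multinomial univ c : ℝ) *
        ∏ i, ((x i) ^ (c i) * ((r : ℝ) * (1 - x i) ^ (r - 1))) := by
    intro c
    apply continuous_const.mul
    apply continuous_finset_prod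
    intro i _
    exact ((continuous_apply i).pow _).mul
      (continuous_const.mul ((continuous_const.sub (continuous_apply i)).pow _))
  calc momentM r m k
      = ∑ c ∈ piAntidiag (univ : Finset (Fin m)) k,
          ∫ x in Set.Icc (0 : Fin m → ℝ) 1,
            (Nat.multinomial univ c : ℝ) *
              ∏ i, ((x i) ^ (c i) * ((r : ℝ) * (1 - x i) ^ (r - 1))) := by
        rw [momentM]
        simp_rw [hexp]
        exact integral_finset_sum _ fun c _ => (hcont c).integrableOn_Icc
    _ = ∑ c ∈ piAntidiag (univ : Finset (Fin m)) k,
          (Nat.multinomial univ c : ℝ) *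
            ∏ i, ∫ t in Set.Icc (0:ℝ) 1, t ^ (c i) * ((r : ℝ) * (1 - t) ^ (r - 1)) := by
        refine Finset.sum_congr rfl fun c _ => ?_
        rw [MeasureTheory.integral_const_mul, cube_prod_integral' m
          (fun i t => t ^ (c i) * ((r : ℝ) * (1 - t) ^ (r - 1)))]
    _ = (k.factorial : ℝ) * ((r.factorial : ℝ)) ^ m *
          ∑ c ∈ piAntidiag (univ : Finset (Fin m)) k,
            (∏ i, ((c i + r).factorial : ℝ))⁻¹ := by
        rw [Finset.mul_sum]
        refine Finset.sum_congr rfl fun c hc => ?_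
        simp_rw [betaI' r hr]
        rw [Finset.prod_div_distrib, Finset.prod_mul_distrib, Finset.prod_const,
          Finset.card_univ, Fintype.card_fin]
        have hsum : ∑ i, c i = k := (Finset.mem_piAntidiag.1 hc).1
        have hspec : (∏ i, (c i).factorial) * Nat.multinomial univ c = k.factorial := by
          rw [Nat.multinomial_spec, hsum]
        have hspecR : (Nat.multinomial univ c : ℝ) * ∏ i, ((c i).factorial : ℝ)
            = (k.factorial : ℝ) := by
          rw [← Nat.cast_prod, ← Nat.cast_mul, mul_comm, hspec]
        rw [div_eq_mul_inv, ← mul_assoc, ← mul_assoc, hspecR]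

open MeasureTheory Finset in
private lemma sum_inv_fact_le' (r m k : ℕ) :
    ∑ c ∈ piAntidiag (univ : Finset (Fin m)) k, (∏ i, ((c i + r).factorial : ℝ))⁻¹
      ≤ (m:ℝ) ^ (k + m * r) / ((k + m * r).factorial : ℝ) := by
  set N := k + m * r with hN
  have hNfac : (0:ℝ) < (N.factorial : ℝ) := by positivity
  have hmN : (m:ℝ) ^ N = ∑ d ∈ piAntidiag (univ : Finset (Fin m)) N,
      (Nat.multinomial univ d : ℝ) := by
    have h := Finset.sum_pow_eq_sum_piAntidiag (univ : Finset (Fin m)) (fun _ => (1:ℝ)) N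
    simpa using h
  have hterm : ∀ c ∈ piAntidiag (univ : Finset (Fin m)) k,
      (∏ i, ((c i + r).factorial : ℝ))⁻¹
        = (Nat.multinomial univ (fun i => c i + r) : ℝ) / (N.factorial : ℝ) := by
    intro c hc
    have hsum : ∑ i, (c i + r) = N := by
      rw [Finset.sum_add_distrib, (Finset.mem_piAntidiag.1 hc).1, Finset.sum_const,
        Finset.card_univ, Fintype.card_fin, smul_eq_mul]
    have hspec : (∏ i, (c i + r).factorial) * Nat.multinomial univ (fun i => c i + r)
        = N.factorial := by rw [Nat.multinomial_spec, hsum]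
    have hprodpos : (0:ℝ) < ∏ i, ((c i + r).factorial : ℝ) := by positivity
    rw [eq_div_iff hNfac.ne', inv_mul_eq_div, div_eq_iff hprodpos.ne', ← Nat.cast_prod,
      ← Nat.cast_mul, mul_comm (Nat.multinomial _ _)]
    exact_mod_cast (congrArg (Nat.cast (R := ℝ)) hspec).symm
  rw [Finset.sum_congr rfl hterm, ← Finset.sum_div, div_le_div_iff_of_pos_right hNfac, hmN]
  have hinj : ∀ a ∈ piAntidiag (univ : Finset (Fin m)) k,
      ∀ b ∈ piAntidiag (univ : Finset (Fin m)) k,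
      (fun c : Fin m → ℕ => fun i => c i + r) a = (fun c : Fin m → ℕ => fun i => c i + r) b
        → a = b := by
    intro a _ b _ hab
    funext i
    have := congrFun hab i
    simpa using this
  have himg : ∑ c ∈ piAntidiag (univ : Finset (Fin m)) k,
        (Nat.multinomial univ (fun i => c i + r) : ℝ)
      = ∑ d ∈ (piAntidiag (univ : Finset (Fin m)) k).image
          (fun c : Fin m → ℕ => fun i => c i + r),
        (Nat.multinomial univ d : ℝ) :=
    (Finset.sum_image (f := fun d => (Nat.multinomial univ d : ℝ))
      (g := fun c : Fin m → ℕ => fun i => c i + r) hinj).symm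
  rw [himg]
  apply Finset.sum_le_sum_of_subset_of_nonneg
  · intro d hd
    simp only [Finset.mem_image] at hd
    obtain ⟨c, hc, rfl⟩ := hd
    rw [Finset.mem_piAntidiag]
    refine ⟨?_, fun i _ => Finset.mem_univ i⟩
    rw [Finset.sum_add_distrib, (Finset.mem_piAntidiag.1 hc).1, Finset.sum_const,
      Finset.card_univ, Fintype.card_fin, smul_eq_mul]
  · intro d _ _
    positivity

theorem stmt_9 (r m : ℕ) (hr : 0 < r) (hm : 0 < m) (k : ℕ) :
    momentM r m k ≤
        (r.factorial : ℝ) ^ m / ((m * r - 1).factorial : ℝ) *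
          ∫ x in (0 : ℝ)..(m : ℝ), x ^ k * ((m : ℝ) - x) ^ (m * r - 1) ∧
      (r.factorial : ℝ) ^ m / ((m * r - 1).factorial : ℝ) *
          ∫ x in (0 : ℝ)..(m : ℝ), x ^ k * ((m : ℝ) - x) ^ (m * r - 1) =
        (k.factorial : ℝ) * (r.factorial : ℝ) ^ m * (m : ℝ) ^ (k + r * m) /
          ((k + m * r).factorial : ℝ) := by
  have hmr : 1 ≤ m * r := Nat.one_le_iff_ne_zero.2 (Nat.mul_ne_zero hm.ne' hr.ne')
  have hidx : k + (m * r - 1) + 1 = k + m * r := by omega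
  have hmR : (0:ℝ) < (m:ℝ) := by exact_mod_cast hm
  have heq : (r.factorial : ℝ) ^ m / ((m * r - 1).factorial : ℝ) *
          ∫ x in (0 : ℝ)..(m : ℝ), x ^ k * ((m : ℝ) - x) ^ (m * r - 1) =
        (k.factorial : ℝ) * (r.factorial : ℝ) ^ m * (m : ℝ) ^ (k + r * m) /
          ((k + m * r).factorial : ℝ) := by
    rw [beta_scaled' (m : ℝ) hmR k (m * r - 1), hidx]
    have h1 : ((m * r - 1).factorial : ℝ) ≠ 0 := by positivity
    have h2 : ((k + m * r).factorial : ℝ) ≠ 0 := by positivity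
    have h3 : k + r * m = k + m * r := by ring
    rw [h3]
    field_simp
  refine ⟨?_, heq⟩
  rw [heq]
  calc momentM r m k
      = (k.factorial : ℝ) * ((r.factorial : ℝ)) ^ m *
          ∑ c ∈ Finset.piAntidiag (Finset.univ : Finset (Fin m)) k,
            (∏ i, ((c i + r).factorial : ℝ))⁻¹ := momentM_eq' r m k hr
    _ ≤ (k.factorial : ℝ) * ((r.factorial : ℝ)) ^ m *
          ((m:ℝ) ^ (k + m * r) / ((k + m * r).factorial : ℝ)) := by
        apply mul_le_mul_of_nonneg_left (sum_inv_fact_le' r m k)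
        positivity
    _ = (k.factorial : ℝ) * (r.factorial : ℝ) ^ m * (m : ℝ) ^ (k + r * m) /
          ((k + m * r).factorial : ℝ) := by
        rw [show k + r * m = k + m * r from by ring]
        ring
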